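/- Let D* ⊆ Υ be any subset with |D*| = k such that c_j ≤ c_i for all j ∈ D* and i ∈ Υ \ D* (i.e., D* consists of k indices of Υ with the smallest values of c). Define a* ∈ {0,1}^n by a*_j = 0 for j ∈ D* and a*_j = ā_j otherwise. Then a* ∈ 𝒜, a* maximizes ⟨c, a⟩ over a ∈ 𝒜, and the maximum value equals Σ_{j ∈ supp(ā)} c_j − Σ_{j ∈ D*} c_j. -/

import Mathlib

/-- Greedy-sorting optimality underlying Proposition 2 of the paper: starting from the
binary vector `ā` feasible for `𝒜 = {a ∈ {0,1}^n : a ≤ ā, Σ_j a_j ≥ n − K}`, zeroing out a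
set `D*` of `k = min(|Υ|, B)` coordinates of `Υ = {j : ā_j = 1, c_j ≤ 0}` with the smallest
values of `c` yields a maximizer `a*` of `⟨c, a⟩` over `𝒜`, whose value is
`Σ_{j ∈ supp(ā)} c_j − Σ_{j ∈ D*} c_j`. -/
theorem stmt_5 (n K : ℕ) (c : Fin n → ℝ) (abar : Fin n → ℝ)
    (habar_bin : ∀ j, abar j = 0 ∨ abar j = 1)
    (habar_card : (n : ℝ) - K ≤ ∑ j, abar j)
    (supp : Finset (Fin n)) (hsupp : supp = Finset.univ.filter (fun j => abar j = 1))
    (Υ : Finset (Fin n)) (hΥ : Υ = supp.filter (fun j => c j ≤ 0))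
    (B : ℕ) (hB : B = supp.card + K - n)
    (k : ℕ) (hk : k = min Υ.card B)
    (Dstar : Finset (Fin n)) (hD_sub : Dstar ⊆ Υ) (hD_card : Dstar.card = k)
    (hD_min : ∀ j ∈ Dstar, ∀ i ∈ Υ \ Dstar, c j ≤ c i)
    (astar : Fin n → ℝ) (hastar : astar = fun j => if j ∈ Dstar then 0 else abar j) :
    ((∀ j, astar j = 0 ∨ astar j = 1) ∧ (∀ j, astar j ≤ abar j) ∧
        (n : ℝ) - K ≤ ∑ j, astar j) ∧
    (∀ a : Fin n → ℝ,
        (∀ j, a j = 0 ∨ a j = 1) → (∀ j, a j ≤ abar j) → (n : ℝ) - K ≤ (∑ j, a j) →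
        (∑ j, c j * a j) ≤ ∑ j, c j * astar j) ∧
    (∑ j, c j * astar j) = (∑ j ∈ supp, c j) - ∑ j ∈ Dstar, c j := by
  -- basic facts
  have habar0 : ∀ j, 0 ≤ abar j := by
    intro j; rcases habar_bin j with h | h <;> rw [h] <;> norm_num
  have hsupp_mem : ∀ j, j ∈ supp ↔ abar j = 1 := by
    intro j; rw [hsupp]; simp
  have hΥ_mem : ∀ j, j ∈ Υ ↔ abar j = 1 ∧ c j ≤ 0 := by
    intro j; rw [hΥ, hsupp]; simp
  have hΥ_supp : Υ ⊆ supp := by rw [hΥ]; exact Finset.filter_subset _ _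
  have hDsupp : Dstar ⊆ supp := hD_sub.trans hΥ_supp
  have sum_abar : ∑ j, abar j = (supp.card : ℝ) := by
    have h1 : ∑ j, abar j = ∑ j ∈ supp, abar j := by
      refine (Finset.sum_subset (Finset.subset_univ _) ?_).symm
      intro j _ hj
      rcases habar_bin j with h | h
      · exact h
      · exact absurd ((hsupp_mem j).2 h) hj
    rw [h1]
    rw [Finset.sum_congr rfl (fun j hj => (hsupp_mem j).1 hj)]
    simp
  have hnK : n ≤ supp.card + K := by
    have : (n : ℝ) ≤ supp.card + K := by
      rw [sum_abar] at habar_card; linarith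
    exact_mod_cast this
  have hkB : k ≤ B := hk ▸ min_le_right _ _
  have hΥcard : Υ.card ≤ supp.card := Finset.card_le_card hΥ_supp
  have hkΥ : k ≤ Υ.card := hk ▸ min_le_left _ _
  -- key lemma on subsets of Υ
  have key : ∀ E ⊆ Υ, E.card ≤ k → ∑ j ∈ Dstar, c j ≤ ∑ j ∈ E, c j := by
    intro E hE hEcard
    have h1 := Finset.sum_inter_add_sum_sdiff Dstar E c
    have h2 := Finset.sum_inter_add_sum_sdiff E Dstar c
    have hcomm : ∑ j ∈ Dstar ∩ E, c j = ∑ j ∈ E ∩ Dstar, c j := by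
      rw [Finset.inter_comm]
    have hcard1 := Finset.card_sdiff_add_card_inter Dstar E
    have hcard2 := Finset.card_sdiff_add_card_inter E Dstar
    have hccomm : (Dstar ∩ E).card = (E ∩ Dstar).card := by rw [Finset.inter_comm]
    have hm : (E \ Dstar).card ≤ (Dstar \ E).card := by omega
    suffices hs : ∑ j ∈ Dstar \ E, c j ≤ ∑ j ∈ E \ Dstar, c j by linarith
    have hEDsub : E \ Dstar ⊆ Υ \ Dstar := Finset.sdiff_subset_sdiff hE (le_refl _)
    have hDneg : ∀ j ∈ Dstar \ E, c j ≤ 0 := by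
      intro j hj
      exact ((hΥ_mem j).1 (hD_sub (Finset.mem_sdiff.1 hj).1)).2
    rcases Nat.eq_zero_or_pos (E \ Dstar).card with h0 | hpos
    · rw [Finset.card_eq_zero.1 h0]
      simp only [Finset.sum_empty]
      exact Finset.sum_nonpos hDneg
    · have hne : (E \ Dstar).Nonempty := Finset.card_pos.1 hpos
      obtain ⟨e0, he0, he0min⟩ := Finset.exists_min_image (E \ Dstar) c hne
      obtain ⟨F, hF, hFcard⟩ := Finset.exists_subset_card_eq (s := Dstar \ E) (n := (E \ Dstar).card) hm
      have hstep1 : ∑ j ∈ Dstar \ E, c j ≤ ∑ j ∈ F, c j := by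
        have := Finset.sum_sdiff hF (f := c)
        have hrest : ∑ j ∈ (Dstar \ E) \ F, c j ≤ 0 :=
          Finset.sum_nonpos (fun j hj => hDneg j (Finset.mem_sdiff.1 hj).1)
        linarith
      have hstep2 : ∑ j ∈ F, c j ≤ (F.card : ℝ) * c e0 := by
        have := Finset.sum_le_card_nsmul F c (c e0) (fun j hj => by
          exact hD_min j (Finset.mem_sdiff.1 (hF hj)).1 e0 (hEDsub he0))
        simpa [nsmul_eq_mul] using this
      have hstep3 : ((E \ Dstar).card : ℝ) * c e0 ≤ ∑ j ∈ E \ Dstar, c j := by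
        have := Finset.card_nsmul_le_sum (E \ Dstar) c (c e0) (fun j hj => he0min j hj)
        simpa [nsmul_eq_mul] using this
      rw [hFcard] at hstep2
      linarith
  -- key lemma on subsets of supp with card ≤ B
  have key2 : ∀ D ⊆ supp, D.card ≤ B → ∑ j ∈ Dstar, c j ≤ ∑ j ∈ D, c j := by
    intro D hD hDcard
    have hE : D ∩ Υ ⊆ Υ := Finset.inter_subset_right
    have hEcard : (D ∩ Υ).card ≤ k := by
      rw [hk]
      refine le_min (Finset.card_le_card hE) ?_
      exact le_trans (Finset.card_le_card Finset.inter_subset_left) hDcard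
    have h1 := key (D ∩ Υ) hE hEcard
    have h2 := Finset.sum_inter_add_sum_sdiff D Υ c
    have h3 : (0:ℝ) ≤ ∑ j ∈ D \ Υ, c j := by
      refine Finset.sum_nonneg (fun j hj => ?_)
      have hj' := Finset.mem_sdiff.1 hj
      have hjsupp := hD hj'.1
      by_contra hc
      exact hj'.2 ((hΥ_mem j).2 ⟨(hsupp_mem j).1 hjsupp, le_of_not_gt (fun h => hc (le_of_lt h))⟩)
    linarith
  -- value of astar
  have hval : (∑ j, c j * astar j) = (∑ j ∈ supp, c j) - ∑ j ∈ Dstar, c j := by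
    have h1 : ∑ j, c j * astar j = ∑ j ∈ supp \ Dstar, c j := by
      rw [hastar]
      have : ∀ j : Fin n, c j * (if j ∈ Dstar then 0 else abar j)
          = if j ∈ supp \ Dstar then c j else 0 := by
        intro j
        by_cases hj : j ∈ Dstar
        · simp [hj, Finset.mem_sdiff]
        · rcases habar_bin j with h | h
          · have : j ∉ supp := fun hs => by rw [(hsupp_mem j).1 hs] at h; norm_num at h
            simp [hj, h, Finset.mem_sdiff, this]
          · have : j ∈ supp := (hsupp_mem j).2 h
            simp [hj, h, Finset.mem_sdiff, this]
      rw [Finset.sum_congr rfl (fun j _ => this j), ← Finset.sum_filter]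
      congr 1
      ext j
      simp [Finset.mem_sdiff]
    rw [h1, Finset.sum_sdiff_eq_sub hDsupp]
  refine ⟨⟨?_, ?_, ?_⟩, ?_, hval⟩
  · intro j; rw [hastar]; by_cases hj : j ∈ Dstar <;> simp [hj, habar_bin j]
  · intro j; rw [hastar]; by_cases hj : j ∈ Dstar <;> simp [hj, habar0 j]
  · -- feasibility of astar
    have h1 : ∑ j, astar j = ∑ j, abar j - ∑ j ∈ Dstar, abar j := by
      rw [hastar]
      have : ∀ j : Fin n, (if j ∈ Dstar then (0:ℝ) else abar j)
          = abar j - (if j ∈ Dstar then abar j else 0) := by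
        intro j; by_cases hj : j ∈ Dstar <;> simp [hj]
      rw [Finset.sum_congr rfl (fun j _ => this j), Finset.sum_sub_distrib]
      congr 1
      rw [← Finset.sum_filter]
      congr 1
      ext j; simp
    have h2 : ∑ j ∈ Dstar, abar j = (Dstar.card : ℝ) := by
      rw [Finset.sum_congr rfl (fun j hj => (hsupp_mem j).1 (hDsupp hj))]
      simp
    rw [h1, h2, sum_abar, hD_card]
    have hBval : B = supp.card + K - n := hB
    have : (n : ℝ) - K ≤ (supp.card : ℝ) - k := by
      have hnat : n ≤ supp.card - k + K := by omega
      have hkc : k ≤ supp.card := by omega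
      have : ((supp.card - k : ℕ) : ℝ) = (supp.card : ℝ) - k := by
        push_cast [Nat.cast_sub hkc]; ring
      have h3 : (n : ℝ) ≤ ((supp.card - k : ℕ) : ℝ) + K := by exact_mod_cast hnat
      rw [this] at h3; linarith
    linarith
  · -- optimality
    intro a ha_bin ha_le ha_card
    set S : Finset (Fin n) := Finset.univ.filter (fun j => a j = 1) with hS
    have hSsupp : S ⊆ supp := by
      intro j hj
      have h1 : a j = 1 := (Finset.mem_filter.1 hj).2
      refine (hsupp_mem j).2 ?_
      rcases habar_bin j with h | h
      · have := ha_le j; rw [h1, h] at this; linarith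
      · exact h
    have hsum_a : ∑ j, a j = (S.card : ℝ) := by
      have h1 : ∑ j, a j = ∑ j ∈ S, a j := by
        refine (Finset.sum_subset (Finset.subset_univ _) ?_).symm
        intro j _ hj
        rcases ha_bin j with h | h
        · exact h
        · exact absurd (Finset.mem_filter.2 ⟨Finset.mem_univ j, h⟩) hj
      rw [h1, Finset.sum_congr rfl (fun j hj => (Finset.mem_filter.1 hj).2)]
      simp
      rfl
    have hsum_ca : ∑ j, c j * a j = ∑ j ∈ S, c j := by
      have : ∀ j : Fin n, c j * a j = if a j = 1 then c j else 0 := by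
        intro j
        rcases ha_bin j with h | h <;> simp [h]
      rw [Finset.sum_congr rfl (fun j _ => this j), ← Finset.sum_filter]
    have hScard : n ≤ S.card + K := by
      have : (n : ℝ) ≤ (S.card : ℝ) + K := by rw [hsum_a] at ha_card; linarith
      exact_mod_cast this
    have hDcard : (supp \ S).card ≤ B := by
      rw [Finset.card_sdiff_of_subset hSsupp]
      have := Finset.card_le_card hSsupp
      omega
    have h1 := key2 (supp \ S) Finset.sdiff_subset hDcard
    have h2 := Finset.sum_sdiff hSsupp (f := c)
    rw [hsum_ca, hval]
    linarith
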